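/- There exists a constant a > 0 such that Tr(h^k(X)) ≥ a·|λ_1(A)|^{2k} holds for every positive integer k and every n×n positive semidefinite real matrix X, where |λ_1(A)| is the largest magnitude of an eigenvalue of A (the spectral radius of A) and h^k denotes the k-fold composition of h. -/

import Mathlib

open Filter Matrix

noncomputable section

/-- The operator `h(X) = A X Aᵀ + Q`. -/
def hOp {n : ℕ} (A Q : Matrix (Fin n) (Fin n) ℝ) (X : Matrix (Fin n) (Fin n) ℝ) :
    Matrix (Fin n) (Fin n) ℝ :=
  A * X * Aᵀ + Q

/-- The controllability matrix `[S, AS, …, A^(n−1) S]`. -/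
def ctrbMat {n : ℕ} (A : Matrix (Fin n) (Fin n) ℝ) (S : Matrix (Fin n) (Fin n) ℝ) :
    Matrix (Fin n) (Fin n × Fin n) ℝ :=
  fun i p => (A ^ (p.1 : ℕ) * S) i p.2

/-- The square root `Matrix.PosSemidef.sqrt` of the older Mathlib, removed since. -/
def psdSqrt {n : ℕ} {Q : Matrix (Fin n) (Fin n) ℝ} (hA : Q.PosSemidef) : Matrix (Fin n) (Fin n) ℝ :=
  hA.1.eigenvectorUnitary.1 * diagonal ((↑) ∘ (√·) ∘ hA.1.eigenvalues) *
  (star hA.1.eigenvectorUnitary : Matrix (Fin n) (Fin n) ℝ)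

/-- The largest magnitude of a (complex) eigenvalue, i.e. the spectral radius `|λ₁|`. -/
def specRad {n : ℕ} (M : Matrix (Fin n) (Fin n) ℂ) : ℝ :=
  sSup {x : ℝ | ∃ μ ∈ spectrum ℂ M, x = ‖μ‖}

namespace TraceHAux

variable {n : ℕ}

lemma psdSqrt_mul_self {Q : Matrix (Fin n) (Fin n) ℝ} (hA : Q.PosSemidef) :
    psdSqrt hA * psdSqrt hA = Q := by
  have hU : (star hA.1.eigenvectorUnitary : Matrix (Fin n) (Fin n) ℝ) *
      hA.1.eigenvectorUnitary.1 = 1 := Unitary.coe_star_mul_self _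
  have hD : diagonal ((↑) ∘ (√·) ∘ hA.1.eigenvalues) *
      diagonal ((↑) ∘ (√·) ∘ hA.1.eigenvalues) =
      diagonal (RCLike.ofReal ∘ hA.1.eigenvalues : Fin n → ℝ) := by
    rw [diagonal_mul_diagonal]
    congr 1
    funext i
    simp [Real.mul_self_sqrt (hA.eigenvalues_nonneg i)]
  conv_rhs => rw [hA.1.spectral_theorem]
  rw [Unitary.conjStarAlgAut_apply, psdSqrt, ← hD]
  simp only [Matrix.mul_assoc]
  rw [← Matrix.mul_assoc (star _ : Matrix (Fin n) (Fin n) ℝ), hU, Matrix.one_mul]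

lemma psdSqrt_isHermitian {Q : Matrix (Fin n) (Fin n) ℝ} (hA : Q.PosSemidef) :
    (psdSqrt hA).IsHermitian := by
  unfold Matrix.IsHermitian psdSqrt
  simp [Matrix.conjTranspose_mul, Matrix.mul_assoc, Matrix.star_eq_conjTranspose,
    Matrix.conjTranspose_eq_transpose_of_trivial]

/-- Squared Frobenius norm, as a trace. -/
def fro (M : Matrix (Fin n) (Fin n) ℝ) : ℝ := (M * Mᵀ).trace

lemma fro_eq (M : Matrix (Fin n) (Fin n) ℝ) : fro M = ∑ i, ∑ j, (M i j) ^ 2 := by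
  simp [fro, Matrix.trace, Matrix.mul_apply, Matrix.diag, sq]

lemma fro_nonneg (M : Matrix (Fin n) (Fin n) ℝ) : 0 ≤ fro M := by
  rw [fro_eq]; positivity

lemma eq_zero_of_fro_eq_zero {M : Matrix (Fin n) (Fin n) ℝ} (h : fro M = 0) : M = 0 := by
  rw [fro_eq] at h
  ext i j
  have h1 : ∀ i ∈ Finset.univ, (0:ℝ) ≤ ∑ j, (M i j) ^ 2 := fun i _ => by positivity
  have h2 := (Finset.sum_eq_zero_iff_of_nonneg h1).mp h i (Finset.mem_univ i)
  have h3 : ∀ j ∈ Finset.univ, (0:ℝ) ≤ (M i j) ^ 2 := fun j _ => by positivity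
  have h4 := (Finset.sum_eq_zero_iff_of_nonneg h3).mp h2 j (Finset.mem_univ j)
  have := sq_eq_zero_iff.mp h4
  simpa using this

lemma fro_mul_le (B C : Matrix (Fin n) (Fin n) ℝ) : fro (B * C) ≤ fro B * fro C := by
  rw [fro_eq, fro_eq, fro_eq]
  calc ∑ i, ∑ j, ((B * C) i j) ^ 2
      = ∑ i, ∑ j, (∑ k, B i k * C k j) ^ 2 := by simp [Matrix.mul_apply]
    _ ≤ ∑ i, ∑ j, (∑ k, (B i k) ^ 2) * (∑ k, (C k j) ^ 2) := by
        refine Finset.sum_le_sum fun i _ => Finset.sum_le_sum fun j _ => ?_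
        exact Finset.sum_mul_sq_le_sq_mul_sq _ _ _
    _ = (∑ i, ∑ k, (B i k) ^ 2) * (∑ k, ∑ j, (C k j) ^ 2) := by
        rw [Finset.sum_mul_sum]
        refine Finset.sum_congr rfl fun i _ => ?_
        rw [← Finset.mul_sum, ← Finset.mul_sum]
        congr 1
        exact Finset.sum_comm

lemma conj_psd {X : Matrix (Fin n) (Fin n) ℝ} (hX : X.PosSemidef)
    (B : Matrix (Fin n) (Fin n) ℝ) : (B * X * Bᵀ).PosSemidef := by
  have := hX.mul_mul_conjTranspose_same B
  rwa [Matrix.conjTranspose_eq_transpose_of_trivial] at this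

lemma psd_trace_nonneg {M : Matrix (Fin n) (Fin n) ℝ} (hM : M.PosSemidef) : 0 ≤ M.trace := by
  rw [Matrix.trace]
  refine Finset.sum_nonneg fun i _ => ?_
  exact hM.diag_nonneg

lemma psd_sum {ι : Type*} (s : Finset ι) (g : ι → Matrix (Fin n) (Fin n) ℝ)
    (h : ∀ i ∈ s, (g i).PosSemidef) : (∑ i ∈ s, g i).PosSemidef :=
  Finset.sum_induction g _ (fun _ _ ha hb => ha.add hb) Matrix.PosSemidef.zero h

lemma iterate_hOp (A Q X : Matrix (Fin n) (Fin n) ℝ) (k : ℕ) :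
    (hOp A Q)^[k] X = A ^ k * X * (A ^ k)ᵀ + ∑ j ∈ Finset.range k, A ^ j * Q * (A ^ j)ᵀ := by
  induction k with
  | zero => simp
  | succ k ih =>
    rw [Function.iterate_succ_apply', ih, hOp,
      Finset.sum_range_succ' (fun j => A ^ j * Q * (A ^ j)ᵀ) k]
    simp only [pow_zero, Matrix.one_mul, Matrix.transpose_one, Matrix.mul_one, pow_succ',
      Matrix.transpose_mul, Matrix.mul_add, Matrix.add_mul, Finset.mul_sum, Finset.sum_mul,
      Matrix.mul_assoc]
    abel

lemma gram_eq (A S : Matrix (Fin n) (Fin n) ℝ) (hS : Sᵀ = S) :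
    ∑ j ∈ Finset.range n, A ^ j * (S * S) * (A ^ j)ᵀ = ctrbMat A S * (ctrbMat A S)ᵀ := by
  have hterm : ∀ j : ℕ, A ^ j * (S * S) * (A ^ j)ᵀ = (A ^ j * S) * (A ^ j * S)ᵀ := by
    intro j
    rw [Matrix.transpose_mul, hS]
    simp only [Matrix.mul_assoc]
  ext i i'
  rw [Matrix.mul_apply]
  simp only [Matrix.sum_apply]
  rw [← Fin.sum_univ_eq_sum_range (fun j => (A ^ j * (S * S) * (A ^ j)ᵀ) i i') n]
  rw [Fintype.sum_prod_type]
  refine Finset.sum_congr rfl fun j _ => ?_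
  rw [hterm, Matrix.mul_apply]
  refine Finset.sum_congr rfl fun l _ => ?_
  simp [ctrbMat, Matrix.transpose_apply]

lemma gram_posDef (hn : 0 < n) (A S : Matrix (Fin n) (Fin n) ℝ) (hS : Sᵀ = S)
    (hrank : (ctrbMat A S).rank = n) :
    (∑ j ∈ Finset.range n, A ^ j * (S * S) * (A ^ j)ᵀ).PosDef := by
  rw [gram_eq A S hS]
  set C := ctrbMat A S with hC
  refine Matrix.PosDef.of_dotProduct_mulVec_pos ?_ ?_
  · have := Matrix.isHermitian_mul_conjTranspose_self C
    rwa [Matrix.conjTranspose_eq_transpose_of_trivial] at this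
  · intro x hx
    have key : Cᵀ *ᵥ x ≠ 0 := by
      intro h0
      apply hx
      have hrankT : Module.finrank ℝ (LinearMap.range (Cᵀ).mulVecLin) = n := by
        have := Matrix.rank_transpose C
        rw [hrank] at this
        exact this
      have h1 := LinearMap.finrank_range_add_finrank_ker (Cᵀ).mulVecLin
      rw [hrankT, Module.finrank_pi, Fintype.card_fin] at h1
      have h2 : Module.finrank ℝ (LinearMap.ker (Cᵀ).mulVecLin) = 0 := by omega
      have h3 : LinearMap.ker (Cᵀ).mulVecLin = ⊥ := Submodule.finrank_eq_zero.mp h2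
      have hxker : x ∈ LinearMap.ker (Cᵀ).mulVecLin := by
        rw [LinearMap.mem_ker, Matrix.mulVecLin_apply]
        exact h0
      rw [h3] at hxker
      simpa using hxker
    have hpos : 0 < (Cᵀ *ᵥ x) ⬝ᵥ (Cᵀ *ᵥ x) := by
      rcases lt_or_eq_of_le (Finset.sum_nonneg fun i _ => mul_self_nonneg ((Cᵀ *ᵥ x) i)) with h | h
      · exact h
      · exact absurd (dotProduct_self_eq_zero.mp h.symm) key
    have heq : (star x) ⬝ᵥ ((C * Cᵀ) *ᵥ x) = (Cᵀ *ᵥ x) ⬝ᵥ (Cᵀ *ᵥ x) := by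
      rw [star_trivial, ← Matrix.mulVec_mulVec, Matrix.dotProduct_mulVec]
      congr 1
      rw [← Matrix.mulVec_transpose]
    rw [heq]
    exact hpos

lemma trace_conj_ge (hn : 0 < n) {G : Matrix (Fin n) (Fin n) ℝ} (hG : G.PosDef) :
    ∃ c : ℝ, 0 < c ∧ ∀ M : Matrix (Fin n) (Fin n) ℝ, c * fro M ≤ (M * G * Mᵀ).trace := by
  set R := psdSqrt hG.posSemidef with hRdef
  have hRR : R * R = G := psdSqrt_mul_self hG.posSemidef
  have hRsym : Rᵀ = R := by
    rw [← Matrix.conjTranspose_eq_transpose_of_trivial]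
    exact psdSqrt_isHermitian hG.posSemidef
  have hdet : IsUnit R.det := by
    have h2 : R.det * R.det = G.det := by rw [← Matrix.det_mul, hRR]
    have h3 := hG.det_pos
    refine isUnit_iff_ne_zero.mpr fun h => ?_
    rw [h, zero_mul] at h2
    linarith
  have hRinv : R * R⁻¹ = 1 := Matrix.mul_nonsing_inv R hdet
  have hfro_pos : 0 < fro R⁻¹ := by
    rcases lt_or_eq_of_le (fro_nonneg R⁻¹) with h | h
    · exact h
    · exfalso
      have h0 : R⁻¹ = 0 := eq_zero_of_fro_eq_zero h.symm
      rw [h0, Matrix.mul_zero] at hRinv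
      have := congrFun (congrFun hRinv ⟨0, hn⟩) ⟨0, hn⟩
      simp at this
  refine ⟨(fro R⁻¹)⁻¹, inv_pos.mpr hfro_pos, fun M => ?_⟩
  have h1 : M * G * Mᵀ = (M * R) * (M * R)ᵀ := by
    rw [Matrix.transpose_mul, hRsym, ← hRR]
    simp only [Matrix.mul_assoc]
  have h2 : fro M ≤ fro (M * R) * fro R⁻¹ := by
    have hM : M = (M * R) * R⁻¹ := by rw [Matrix.mul_assoc, hRinv, Matrix.mul_one]
    calc fro M = fro ((M * R) * R⁻¹) := by rw [← hM]
      _ ≤ fro (M * R) * fro R⁻¹ := fro_mul_le _ _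
  have h3 : (M * G * Mᵀ).trace = fro (M * R) := by rw [h1]; rfl
  rw [h3, inv_mul_le_iff₀ hfro_pos, mul_comm]
  exact h2

lemma eig_bound {B : Matrix (Fin n) (Fin n) ℂ} {μ : ℂ} {v : Fin n → ℂ}
    (hv : v ≠ 0) (hBv : B *ᵥ v = μ • v) : ‖μ‖ ^ 2 ≤ ∑ i, ∑ j, ‖B i j‖ ^ 2 := by
  set s : ℝ := ∑ j, ‖v j‖ ^ 2 with hs
  have hs_pos : 0 < s := by
    obtain ⟨j0, hj0⟩ := Function.ne_iff.mp hv
    have hvj : v j0 ≠ 0 := by simpa using hj0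
    have h0 : 0 < ‖v j0‖ ^ 2 := pow_pos (norm_pos_iff.mpr hvj) 2
    have h1 : ‖v j0‖ ^ 2 ≤ s := by
      rw [hs]
      exact Finset.single_le_sum (f := fun j => ‖v j‖ ^ 2) (fun j _ => sq_nonneg _) (Finset.mem_univ j0)
    exact lt_of_lt_of_le h0 h1
  have key : ‖μ‖ ^ 2 * s ≤ (∑ i, ∑ j, ‖B i j‖ ^ 2) * s := by
    have lhs_eq : ‖μ‖ ^ 2 * s = ∑ i, ‖(B *ᵥ v) i‖ ^ 2 := by
      rw [hBv, hs, Finset.mul_sum]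
      refine Finset.sum_congr rfl fun i _ => ?_
      simp [norm_smul, mul_pow]
    rw [lhs_eq]
    calc ∑ i, ‖(B *ᵥ v) i‖ ^ 2
        ≤ ∑ i, (∑ j, ‖B i j‖ ^ 2) * s := by
          refine Finset.sum_le_sum fun i _ => ?_
          have h1 : ‖(B *ᵥ v) i‖ ≤ ∑ j, ‖B i j‖ * ‖v j‖ := by
            calc ‖(B *ᵥ v) i‖ = ‖∑ j, B i j * v j‖ := by
                  simp [Matrix.mulVec, dotProduct]
              _ ≤ ∑ j, ‖B i j * v j‖ := norm_sum_le _ _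
              _ = ∑ j, ‖B i j‖ * ‖v j‖ := by simp [norm_mul]
          calc ‖(B *ᵥ v) i‖ ^ 2 ≤ (∑ j, ‖B i j‖ * ‖v j‖) ^ 2 :=
                pow_le_pow_left₀ (norm_nonneg _) h1 2
            _ ≤ (∑ j, ‖B i j‖ ^ 2) * s := Finset.sum_mul_sq_le_sq_mul_sq _ _ _
      _ = (∑ i, ∑ j, ‖B i j‖ ^ 2) * s := by rw [← Finset.sum_mul]
  exact le_of_mul_le_mul_right key hs_pos

lemma spec_pow_bound (A : Matrix (Fin n) (Fin n) ℝ) (μ : ℂ)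
    (hμ : μ ∈ spectrum ℂ (A.map Complex.ofReal)) (m : ℕ) :
    ‖μ‖ ^ (2 * m) ≤ fro (A ^ m) := by
  set A' := A.map Complex.ofReal with hA'
  rw [spectrum.mem_iff] at hμ
  have hdet : (algebraMap ℂ (Matrix (Fin n) (Fin n) ℂ) μ - A').det = 0 := by
    by_contra h
    exact hμ ((Matrix.isUnit_iff_isUnit_det _).mpr (isUnit_iff_ne_zero.mpr h))
  obtain ⟨v, hv, hv0⟩ := Matrix.exists_mulVec_eq_zero_iff.mpr hdet
  have hAv : A' *ᵥ v = μ • v := by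
    have h1 : (algebraMap ℂ (Matrix (Fin n) (Fin n) ℂ) μ) *ᵥ v = μ • v := by
      rw [Algebra.algebraMap_eq_smul_one, Matrix.smul_mulVec, Matrix.one_mulVec]
    rw [Matrix.sub_mulVec, sub_eq_zero] at hv0
    rw [← hv0, h1]
  have hpow : (A' ^ m) *ᵥ v = (μ ^ m) • v := by
    induction m with
    | zero => simp
    | succ t ih =>
      rw [pow_succ', ← Matrix.mulVec_mulVec, ih, Matrix.mulVec_smul, hAv, smul_smul, ← pow_succ]
  have hbd := eig_bound hv hpow
  have hmap : A' ^ m = (A ^ m).map Complex.ofReal := by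
    have h := map_pow (Complex.ofRealHom.mapMatrix) A m
    simp only [RingHom.mapMatrix_apply] at h
    exact h.symm
  calc ‖μ‖ ^ (2 * m) = ‖μ ^ m‖ ^ 2 := by rw [norm_pow, ← pow_mul, mul_comm]
    _ ≤ ∑ i, ∑ j, ‖(A' ^ m) i j‖ ^ 2 := hbd
    _ = fro (A ^ m) := by
        rw [hmap, fro_eq]
        refine Finset.sum_congr rfl fun i _ => Finset.sum_congr rfl fun j _ => ?_
        simp [Matrix.map_apply, Complex.norm_real, Real.norm_eq_abs, sq_abs]

lemma specRad_spec (hn : 0 < n) (A : Matrix (Fin n) (Fin n) ℝ) :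
    0 ≤ specRad (A.map Complex.ofReal) ∧
      ∀ m : ℕ, 0 < m → specRad (A.map Complex.ofReal) ^ (2 * m) ≤ fro (A ^ m) := by
  haveI : Nonempty (Fin n) := ⟨⟨0, hn⟩⟩
  letI : NormedRing (Matrix (Fin n) (Fin n) ℂ) := Matrix.linftyOpNormedRing
  letI : NormedAlgebra ℂ (Matrix (Fin n) (Fin n) ℂ) := Matrix.linftyOpNormedAlgebra
  haveI : CompleteSpace (Matrix (Fin n) (Fin n) ℂ) := FiniteDimensional.complete ℂ _
  obtain ⟨μ₀, hμ₀⟩ := spectrum.nonempty (A.map Complex.ofReal)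
  set S : Set ℝ := {x : ℝ | ∃ μ ∈ spectrum ℂ (A.map Complex.ofReal), x = ‖μ‖} with hSdef
  have hspec : specRad (A.map Complex.ofReal) = sSup S := rfl
  have hmem : ‖μ₀‖ ∈ S := ⟨μ₀, hμ₀, rfl⟩
  have hub : ∀ m : ℕ, 0 < m → ∀ x ∈ S, x ≤ (fro (A ^ m)) ^ (((2 * m : ℕ) : ℝ))⁻¹ := by
    rintro m hm x ⟨μ, hμ, rfl⟩
    have h1 := spec_pow_bound A μ hμ m
    have h2m : (0 : ℝ) < ((2 * m : ℕ) : ℝ) := by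
      have : 0 < 2 * m := by omega
      exact_mod_cast this
    have hμeq : ‖μ‖ = (‖μ‖ ^ (2 * m)) ^ (((2 * m : ℕ) : ℝ))⁻¹ := by
      rw [← Real.rpow_natCast ‖μ‖ (2 * m), ← Real.rpow_mul (norm_nonneg μ),
        mul_inv_cancel₀ h2m.ne', Real.rpow_one]
    rw [hμeq]
    exact Real.rpow_le_rpow (by positivity) h1 (by positivity)
  have hbdd : BddAbove S :=
    ⟨(fro (A ^ 1)) ^ (((2 * 1 : ℕ) : ℝ))⁻¹, fun x hx => hub 1 one_pos x hx⟩
  have hρ0 : 0 ≤ specRad (A.map Complex.ofReal) := by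
    rw [hspec]
    exact le_trans (norm_nonneg μ₀) (le_csSup hbdd hmem)
  refine ⟨hρ0, fun m hm => ?_⟩
  have h2m : (0 : ℝ) < ((2 * m : ℕ) : ℝ) := by
    have : 0 < 2 * m := by omega
    exact_mod_cast this
  have hle : specRad (A.map Complex.ofReal) ≤ (fro (A ^ m)) ^ (((2 * m : ℕ) : ℝ))⁻¹ := by
    rw [hspec]
    exact csSup_le ⟨_, hmem⟩ (hub m hm)
  calc specRad (A.map Complex.ofReal) ^ (2 * m)
      ≤ ((fro (A ^ m)) ^ (((2 * m : ℕ) : ℝ))⁻¹) ^ (2 * m) := pow_le_pow_left₀ hρ0 hle _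
    _ = fro (A ^ m) := by
        rw [← Real.rpow_natCast ((fro (A ^ m)) ^ (((2 * m : ℕ) : ℝ))⁻¹) (2 * m),
          ← Real.rpow_mul (fro_nonneg _), inv_mul_cancel₀ h2m.ne', Real.rpow_one]

end TraceHAux

open TraceHAux in
/-- There is a constant `a > 0` such that `Tr(h^k(X)) ≥ a |λ₁(A)|^(2k)` for every `k ≥ 1`
and every positive semidefinite `X`. -/
theorem trace_hIter_ge
    {n : ℕ} (hn : 0 < n)
    (A : Matrix (Fin n) (Fin n) ℝ)
    (Q : Matrix (Fin n) (Fin n) ℝ) (hQ : Q.PosSemidef)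
    (hCtrb : (ctrbMat A (psdSqrt hQ)).rank = n) :
    ∃ a : ℝ, 0 < a ∧ ∀ k : ℕ, 1 ≤ k → ∀ X : Matrix (Fin n) (Fin n) ℝ, X.PosSemidef →
      a * specRad (A.map Complex.ofReal) ^ (2 * k) ≤ ((hOp A Q)^[k] X).trace := by
  haveI : Nonempty (Fin n) := ⟨⟨0, hn⟩⟩
  set S := psdSqrt hQ with hSdef
  have hSsym : Sᵀ = S := by
    rw [← Matrix.conjTranspose_eq_transpose_of_trivial]
    exact psdSqrt_isHermitian hQ
  have hSS : S * S = Q := psdSqrt_mul_self hQ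
  -- trace of Q is positive
  have hQtr : 0 < Q.trace := by
    have h1 : Q.trace = fro S := by
      rw [fro, hSsym, hSS]
    rw [h1]
    rcases lt_or_eq_of_le (fro_nonneg S) with h | h
    · exact h
    · exfalso
      have hS0 : S = 0 := eq_zero_of_fro_eq_zero h.symm
      rw [hS0] at hCtrb
      have hC0 : ctrbMat A (0 : Matrix (Fin n) (Fin n) ℝ) = 0 := by
        ext i p
        simp [ctrbMat]
      rw [hC0, Matrix.rank_zero] at hCtrb
      omega
  -- the controllability Gramian is positive definite
  have hGpd : (∑ j ∈ Finset.range n, A ^ j * Q * (A ^ j)ᵀ).PosDef := by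
    have := gram_posDef hn A S hSsym hCtrb
    rwa [hSS] at this
  obtain ⟨c, hc, hcM⟩ := trace_conj_ge hn hGpd
  obtain ⟨hρ0, hρm⟩ := specRad_spec hn A
  set ρ := specRad (A.map Complex.ofReal) with hρdef
  set Mx := max 1 ρ with hMxdef
  have hMx1 : (1 : ℝ) ≤ Mx := le_max_left _ _
  have hMx0 : (0 : ℝ) < Mx := lt_of_lt_of_le zero_lt_one hMx1
  have hρMx : ρ ≤ Mx := le_max_right _ _
  refine ⟨min Q.trace c / Mx ^ (2 * n), div_pos (lt_min hQtr hc) (pow_pos hMx0 _), ?_⟩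
  intro k hk X hX
  set a := min Q.trace c / Mx ^ (2 * n) with hadef
  have ha0 : 0 < a := div_pos (lt_min hQtr hc) (pow_pos hMx0 _)
  have haMx : a * Mx ^ (2 * n) ≤ min Q.trace c := by
    rw [hadef, div_mul_cancel₀ _ (by positivity : (Mx : ℝ) ^ (2 * n) ≠ 0)]
  -- lower bound by the Gramian part
  have htr1 : (∑ j ∈ Finset.range k, A ^ j * Q * (A ^ j)ᵀ).trace ≤ ((hOp A Q)^[k] X).trace := by
    rw [iterate_hOp, Matrix.trace_add]
    have h0 : 0 ≤ (A ^ k * X * (A ^ k)ᵀ).trace := psd_trace_nonneg (conj_psd hX (A ^ k))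
    linarith
  by_cases hkn : k < n
  · -- small k : trace is at least trace Q
    obtain ⟨t, rfl⟩ : ∃ t, k = 1 + t := ⟨k - 1, by omega⟩
    have hsplit :
        (∑ j ∈ Finset.range (1 + t), A ^ j * Q * (A ^ j)ᵀ).trace =
          (∑ j ∈ Finset.range 1, A ^ j * Q * (A ^ j)ᵀ).trace +
          (∑ i ∈ Finset.range t, A ^ (1 + i) * Q * (A ^ (1 + i))ᵀ).trace := by
      rw [Finset.sum_range_add, Matrix.trace_add]
    have h01 : (∑ j ∈ Finset.range 1, A ^ j * Q * (A ^ j)ᵀ).trace = Q.trace := by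
      simp
    have h02 : 0 ≤ (∑ i ∈ Finset.range t, A ^ (1 + i) * Q * (A ^ (1 + i))ᵀ).trace :=
      psd_trace_nonneg (psd_sum _ _ fun i _ => conj_psd hQ _)
    have hQle : Q.trace ≤ ((hOp A Q)^[1 + t] X).trace := by
      refine le_trans ?_ htr1
      rw [hsplit, h01]
      linarith
    have hpow : ρ ^ (2 * (1 + t)) ≤ Mx ^ (2 * n) := by
      calc ρ ^ (2 * (1 + t)) ≤ Mx ^ (2 * (1 + t)) := pow_le_pow_left₀ hρ0 hρMx _
        _ ≤ Mx ^ (2 * n) := pow_le_pow_right₀ hMx1 (by omega)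
    calc a * ρ ^ (2 * (1 + t)) ≤ a * Mx ^ (2 * n) := by
          exact mul_le_mul_of_nonneg_left hpow ha0.le
      _ ≤ min Q.trace c := haMx
      _ ≤ Q.trace := min_le_left _ _
      _ ≤ ((hOp A Q)^[1 + t] X).trace := hQle
  · -- large k : k = m + n
    obtain ⟨m, rfl⟩ : ∃ m, k = m + n := ⟨k - n, by omega⟩
    have h2 : ∑ i ∈ Finset.range n, A ^ (m + i) * Q * (A ^ (m + i))ᵀ =
        A ^ m * (∑ j ∈ Finset.range n, A ^ j * Q * (A ^ j)ᵀ) * (A ^ m)ᵀ := by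
      rw [Finset.mul_sum, Finset.sum_mul]
      refine Finset.sum_congr rfl fun i _ => ?_
      simp only [pow_add, Matrix.transpose_mul, Matrix.mul_assoc]
    have htr2 : (A ^ m * (∑ j ∈ Finset.range n, A ^ j * Q * (A ^ j)ᵀ) * (A ^ m)ᵀ).trace ≤
        (∑ j ∈ Finset.range (m + n), A ^ j * Q * (A ^ j)ᵀ).trace := by
      rw [Finset.sum_range_add, Matrix.trace_add, ← h2]
      have h0 : 0 ≤ (∑ j ∈ Finset.range m, A ^ j * Q * (A ^ j)ᵀ).trace :=
        psd_trace_nonneg (psd_sum _ _ fun i _ => conj_psd hQ _)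
      linarith
    have htr3 := hcM (A ^ m)
    have hρ2m : ρ ^ (2 * m) ≤ fro (A ^ m) := by
      rcases Nat.eq_zero_or_pos m with hm0 | hm0
      · subst hm0
        have h1 : fro ((A : Matrix (Fin n) (Fin n) ℝ) ^ 0) = (n : ℝ) := by simp [fro]
        rw [mul_zero, pow_zero, h1]
        exact_mod_cast hn
      · exact hρm m hm0
    have hρ2n : ρ ^ (2 * n) ≤ Mx ^ (2 * n) := pow_le_pow_left₀ hρ0 hρMx _
    calc a * ρ ^ (2 * (m + n))
        = a * (ρ ^ (2 * m) * ρ ^ (2 * n)) := by rw [← pow_add]; ring_nf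
      _ ≤ a * (fro (A ^ m) * Mx ^ (2 * n)) := by
          refine mul_le_mul_of_nonneg_left ?_ ha0.le
          exact mul_le_mul hρ2m hρ2n (by positivity) (fro_nonneg _)
      _ = (a * Mx ^ (2 * n)) * fro (A ^ m) := by ring
      _ ≤ c * fro (A ^ m) := by
          refine mul_le_mul_of_nonneg_right ?_ (fro_nonneg _)
          exact le_trans haMx (min_le_right _ _)
      _ ≤ (A ^ m * (∑ j ∈ Finset.range n, A ^ j * Q * (A ^ j)ᵀ) * (A ^ m)ᵀ).trace := htr3
      _ ≤ (∑ j ∈ Finset.range (m + n), A ^ j * Q * (A ^ j)ᵀ).trace := htr2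
      _ ≤ ((hOp A Q)^[m + n] X).trace := htr1
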